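/- Let w₁,…,w_n ∈ ℝ^k, let μ_q, μ_r ∈ ℝ^k, and let (T_q, T_r) be a partition of a finite index set S ⊆ [n]. If (W[T_q], W[T_r]) is not weakly linearly separated by the hyperplane with normal μ_q − μ_r, then there exists another partition (T_q', T_r') of S with |T_q'| = |T_q| such that ⟨μ_q, Σ_{j∈T_q'} w_j⟩ + ⟨μ_r, Σ_{j∈T_r'} w_j⟩ > ⟨μ_q, Σ_{j∈T_q} w_j⟩ + ⟨μ_r, Σ_{j∈T_r} w_j⟩. -/
import Mathlib


open Finset Matrix

theorem stmt_12 (n k : ℕ) (w : Fin n → (Fin k → ℝ)) (μq μr : Fin k → ℝ)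
    (S Tq Tr : Finset (Fin n)) (hunion : Tq ∪ Tr = S) (hdisj : Disjoint Tq Tr)
    (hnotsep : ¬ ∃ β : ℝ,
      (∀ j ∈ Tq, β ≤ (μq - μr) ⬝ᵥ w j) ∧ (∀ j ∈ Tr, (μq - μr) ⬝ᵥ w j ≤ β)) :
    ∃ Tq' Tr' : Finset (Fin n), Tq' ∪ Tr' = S ∧ Disjoint Tq' Tr' ∧
      Tq'.card = Tq.card ∧
      μq ⬝ᵥ (∑ j ∈ Tq, w j) + μr ⬝ᵥ (∑ j ∈ Tr, w j) <
        μq ⬝ᵥ (∑ j ∈ Tq', w j) + μr ⬝ᵥ (∑ j ∈ Tr', w j) := by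
  set f : Fin n → ℝ := fun j => (μq - μr) ⬝ᵥ w j with hf
  -- Tq is nonempty
  have hTq : Tq.Nonempty := by
    rcases Tq.eq_empty_or_nonempty with h | h
    · exfalso
      obtain ⟨M, hM⟩ := (Tr.image f).exists_le
      exact hnotsep ⟨M, fun j hj => by simp [h] at hj,
        fun j hj => hM _ (Finset.mem_image_of_mem f hj)⟩
    · exact h
  obtain ⟨a, haTq, hamin⟩ := Tq.exists_min_image f hTq
  -- min over Tq fails as β on the Tr side
  push_neg at hnotsep
  obtain ⟨b, hbTr, hab⟩ := hnotsep (f a) hamin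
  have hfab : f a < f b := hab
  have hbTq : b ∉ Tq := fun hb => hdisj.forall_ne_finset hb hbTr rfl
  have haTr : a ∉ Tr := fun ha => hdisj.forall_ne_finset haTq ha rfl
  have hne : a ≠ b := fun h => hbTq (h ▸ haTq)
  refine ⟨insert b (Tq.erase a), insert a (Tr.erase b), ?_, ?_, ?_, ?_⟩
  · rw [← hunion]
    ext x
    simp only [Finset.mem_union, Finset.mem_insert, Finset.mem_erase]
    constructor
    · rintro ((rfl | h) | (rfl | h))
      · exact Or.inr hbTr
      · exact Or.inl h.2
      · exact Or.inl haTq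
      · exact Or.inr h.2
    · rintro (h | h)
      · by_cases hx : x = b
        · left; left; exact hx
        · by_cases hx' : x = a
          · right; left; exact hx'
          · left; right; exact ⟨hx', h⟩
      · by_cases hx : x = a
        · right; left; exact hx
        · by_cases hx' : x = b
          · left; left; exact hx'
          · right; right; exact ⟨hx', h⟩
  · rw [Finset.disjoint_left]
    intro x hx hx'
    simp only [Finset.mem_insert, Finset.mem_erase] at hx hx'
    rcases hx with rfl | ⟨hxa, hxTq⟩
    · rcases hx' with h' | ⟨h1, h2⟩
      · exact hne h'.symm
      · exact h1 rfl
    · rcases hx' with rfl | ⟨h1, h2⟩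
      · exact hxa rfl
      · exact hdisj.forall_ne_finset hxTq h2 rfl
  · rw [Finset.card_insert_of_notMem (fun hb => hbTq (Finset.mem_of_mem_erase hb)),
      Finset.card_erase_of_mem haTq]
    have h1 : 1 ≤ Tq.card := Finset.card_pos.mpr ⟨a, haTq⟩
    omega
  · have hsq : ∑ j ∈ insert b (Tq.erase a), w j = ∑ j ∈ Tq, w j - w a + w b := by
      rw [Finset.sum_insert (fun hb => hbTq (Finset.mem_of_mem_erase hb)),
        Finset.sum_erase_eq_sub haTq]
      ring
    have hsr : ∑ j ∈ insert a (Tr.erase b), w j = ∑ j ∈ Tr, w j - w b + w a := by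
      rw [Finset.sum_insert (fun ha => haTr (Finset.mem_of_mem_erase ha)),
        Finset.sum_erase_eq_sub hbTr]
      ring
    rw [hsq, hsr]
    have hfa : f a = (μq - μr) ⬝ᵥ w a := rfl
    have hfb : f b = (μq - μr) ⬝ᵥ w b := rfl
    simp only [dotProduct_add, dotProduct_sub, sub_dotProduct] at *
    linarith
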